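/- arXiv:1706.01155 — 2 statements merged into one kernel-verified Lean document; each statement's English description precedes it below -/
import Mathlib

section
/- Lipschitz continuity of the transform in its squared arguments: fix ε > 0, C₀ > 0 and C₁,…,C_m ≥ 0, and define g(x₀, x₁, …, x_m) = x₀²/(C₀ + Σ_{j=1}^m C_j x_j² + ε x₀²) for (x₀,…,x_m) ∈ ℝ^{m+1}. Then there exists a finite constant L, depending only on ε, C₀ and C₁,…,C_m (one may take L = max(1/C₀, max_{1≤j≤m} C_j/(4 C₀ ε))), such that |g(x) − g(x')| ≤ L·Σ_{k=0}^m |x_k² − (x_k')²| for all x, x' ∈ ℝ^{m+1}. Hence the specific transform g₁ used in Stage 1 satisfies assumption (A5). -/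
set_option maxHeartbeats 1000000


/-- Lipschitz continuity of the Stage-1 transform in its squared arguments:
fix `ε > 0`, `C₀ > 0` and `C₁,…,C_m ≥ 0`, and define
`g (x₀, x₁, …, x_m) = x₀² / (C₀ + Σ_{j=1}^m C_j x_j² + ε x₀²)`.
Then there exists a finite constant `L ≥ 0`, depending only on `ε`, `C₀` and the `C_j`,
such that `|g x − g x'| ≤ L · Σ_{k=0}^m |x_k² − (x_k')²|` for all `x, x' ∈ ℝ^(m+1)`.
Hence the transform `g₁` used in Stage 1 satisfies assumption (A5). -/
theorem stmt7 (m : ℕ) (ε C₀ : ℝ) (hε : 0 < ε) (hC₀ : 0 < C₀)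
    (C : Fin m → ℝ) (hC : ∀ j, 0 ≤ C j) :
    ∃ L : ℝ, 0 ≤ L ∧
      ∀ x y : Fin (m + 1) → ℝ,
        |(x 0) ^ 2 / (C₀ + (∑ j : Fin m, C j * (x j.succ) ^ 2) + ε * (x 0) ^ 2)
            - (y 0) ^ 2 / (C₀ + (∑ j : Fin m, C j * (y j.succ) ^ 2) + ε * (y 0) ^ 2)|
          ≤ L * ∑ k : Fin (m + 1), |(x k) ^ 2 - (y k) ^ 2| := by
  set Cs : ℝ := ∑ j : Fin m, C j with hCsdef
  have hCs0 : 0 ≤ Cs := Finset.sum_nonneg fun j _ => hC j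
  refine ⟨1 / C₀ + Cs / (ε * C₀), by positivity, fun x y => ?_⟩
  set a := (x 0) ^ 2 with hadef
  set b := (y 0) ^ 2 with hbdef
  set S := ∑ j : Fin m, C j * (x j.succ) ^ 2 with hSdef
  set T := ∑ j : Fin m, C j * (y j.succ) ^ 2 with hTdef
  have ha : 0 ≤ a := sq_nonneg _
  have hb : 0 ≤ b := sq_nonneg _
  have hS : 0 ≤ S := Finset.sum_nonneg fun j _ => mul_nonneg (hC j) (sq_nonneg _)
  have hT : 0 ≤ T := Finset.sum_nonneg fun j _ => mul_nonneg (hC j) (sq_nonneg _)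
  have hD1 : 0 < C₀ + S + ε * a := by nlinarith
  have hD2 : 0 < C₀ + T + ε * b := by nlinarith
  set D1 := C₀ + S + ε * a with hD1def
  set D2 := C₀ + T + ε * b with hD2def
  set d0 := |a - b| with hd0def
  have hd00 : 0 ≤ d0 := abs_nonneg _
  set DS := ∑ j : Fin m, |(x j.succ) ^ 2 - (y j.succ) ^ 2| with hDSdef
  have hDS0 : 0 ≤ DS := Finset.sum_nonneg fun j _ => abs_nonneg _
  have hsum : ∑ k : Fin (m + 1), |(x k) ^ 2 - (y k) ^ 2| = d0 + DS := by
    rw [Fin.sum_univ_succ]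
  rw [hsum]
  have hid : a / D1 - b / D2 = ((a - b) * (C₀ + S) + a * (T - S)) / (D1 * D2) := by
    field_simp
    ring
  have hTS : |T - S| ≤ Cs * DS := by
    have h1 : T - S = ∑ j : Fin m, C j * ((y j.succ) ^ 2 - (x j.succ) ^ 2) := by
      rw [hTdef, hSdef, ← Finset.sum_sub_distrib]
      exact Finset.sum_congr rfl fun j _ => by ring
    calc |T - S| ≤ ∑ j : Fin m, |C j * ((y j.succ) ^ 2 - (x j.succ) ^ 2)| := by
          rw [h1]; exact Finset.abs_sum_le_sum_abs _ _
      _ = ∑ j : Fin m, C j * |(x j.succ) ^ 2 - (y j.succ) ^ 2| := by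
          refine Finset.sum_congr rfl fun j _ => ?_
          rw [abs_mul, abs_of_nonneg (hC j), ← abs_neg]
          ring_nf
      _ ≤ ∑ j : Fin m, Cs * |(x j.succ) ^ 2 - (y j.succ) ^ 2| := by
          refine Finset.sum_le_sum fun j _ => ?_
          have : C j ≤ Cs := Finset.single_le_sum (fun i _ => hC i) (Finset.mem_univ j)
          exact mul_le_mul_of_nonneg_right this (abs_nonneg _)
      _ = Cs * DS := by rw [Finset.mul_sum]
  have hCS_le : C₀ + S ≤ D1 := by nlinarith
  have ha_le : a ≤ D1 / ε := by
    rw [le_div_iff₀ hε]; nlinarith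
  calc |a / D1 - b / D2|
      = |(a - b) * (C₀ + S) + a * (T - S)| / (D1 * D2) := by
        rw [hid, abs_div, abs_of_pos (mul_pos hD1 hD2)]
    _ ≤ (d0 * (C₀ + S) + a * (Cs * DS)) / (D1 * D2) := by
        gcongr
        calc |(a - b) * (C₀ + S) + a * (T - S)|
            ≤ |(a - b) * (C₀ + S)| + |a * (T - S)| := abs_add_le _ _
          _ = d0 * (C₀ + S) + a * |T - S| := by
              rw [abs_mul, abs_mul, abs_of_nonneg (by positivity : (0:ℝ) ≤ C₀ + S),
                abs_of_nonneg ha]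
          _ ≤ d0 * (C₀ + S) + a * (Cs * DS) := by gcongr
    _ ≤ (d0 * D1 + (D1 / ε) * (Cs * DS)) / (D1 * D2) := by gcongr
    _ = (d0 + Cs * DS / ε) / D2 := by
        field_simp
    _ ≤ (d0 + Cs * DS / ε) / C₀ := by
        have hC₀D2 : C₀ ≤ D2 := by nlinarith
        gcongr
    _ ≤ (1 / C₀ + Cs / (ε * C₀)) * (d0 + DS) := by
        have hkey : (1 / C₀ + Cs / (ε * C₀)) * (d0 + DS) - (d0 + Cs * DS / ε) / C₀
            = DS / C₀ + Cs * d0 / (ε * C₀) := by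
          field_simp
          ring
        nlinarith [div_nonneg hDS0 hC₀.le,
          div_nonneg (mul_nonneg hCs0 hd00) (mul_nonneg hε.le hC₀.le)]
end

section
/- CUSUM of a one-change step signal is maximized at the change-point: let s ≤ η < e be integers with e − s ≥ 1, and let x_t = μ₁ for s ≤ t ≤ η and x_t = μ₂ for η < t ≤ e, with μ₁ ≠ μ₂. Define the CUSUM X_{s,c,e} = sqrt((c−s+1)(e−c)/(e−s+1))·((c−s+1)^{−1}Σ_{t=s}^c x_t − (e−c)^{−1}Σ_{t=c+1}^e x_t) for c = s,…,e−1. Then X_{s,η,e} = sqrt((η−s+1)(e−η)/(e−s+1))·(μ₁ − μ₂), and |X_{s,c,e}| ≤ |X_{s,η,e}| for every c ∈ {s,…,e−1}, with equality only at c = η. -/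
open Finset

/-- The CUSUM statistic of the real sequence `x` over the segment `[s, e]` at the
candidate change location `c ∈ [s, e)`:
`X_{s,c,e} = sqrt((c−s+1)(e−c)/(e−s+1)) · ((c−s+1)⁻¹ Σ_{t=s}^c x_t − (e−c)⁻¹ Σ_{t=c+1}^e x_t)`. -/
noncomputable def cusum (x : ℕ → ℝ) (s c e : ℕ) : ℝ :=
  Real.sqrt (((c : ℝ) - s + 1) * ((e : ℝ) - c) / ((e : ℝ) - s + 1)) *
    ((∑ t ∈ Finset.Icc s c, x t) / ((c : ℝ) - s + 1)
      - (∑ t ∈ Finset.Icc (c + 1) e, x t) / ((e : ℝ) - c))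

lemma sum_Icc_split (f : ℕ → ℝ) (a b c : ℕ) (hab : a ≤ b + 1) (hbc : b ≤ c) :
    ∑ t ∈ Finset.Icc a c, f t
      = ∑ t ∈ Finset.Icc a b, f t + ∑ t ∈ Finset.Icc (b + 1) c, f t := by
  rw [← Finset.sum_union (by
    simp only [Finset.disjoint_left, Finset.mem_Icc]; omega)]
  congr 1
  ext t
  simp only [Finset.mem_union, Finset.mem_Icc]
  omega

lemma sum_Icc_const (x : ℕ → ℝ) (m n : ℕ) (μ : ℝ) (hmn : m ≤ n + 1)
    (h : ∀ t, m ≤ t → t ≤ n → x t = μ) :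
    ∑ t ∈ Finset.Icc m n, x t = ((n : ℝ) + 1 - m) * μ := by
  have : ∑ t ∈ Finset.Icc m n, x t = ∑ _t ∈ Finset.Icc m n, μ :=
    Finset.sum_congr rfl fun t ht => h t (Finset.mem_Icc.mp ht).1 (Finset.mem_Icc.mp ht).2
  rw [this, Finset.sum_const, Nat.card_Icc, nsmul_eq_mul, Nat.cast_sub hmn]
  push_cast
  ring

lemma cusum_left (s η e : ℕ) (μ₁ μ₂ : ℝ) (x : ℕ → ℝ)
    (hx1 : ∀ t, s ≤ t → t ≤ η → x t = μ₁)
    (hx2 : ∀ t, η < t → t ≤ e → x t = μ₂)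
    (c : ℕ) (hsc : s ≤ c) (hcη : c ≤ η) (hηe : η < e) :
    cusum x s c e
      = Real.sqrt (((c : ℝ) - s + 1) * ((e : ℝ) - c) / ((e : ℝ) - s + 1)) *
          (((e : ℝ) - η) * (μ₁ - μ₂) / ((e : ℝ) - c)) := by
  have hS1 : ∑ t ∈ Finset.Icc s c, x t = ((c : ℝ) + 1 - s) * μ₁ :=
    sum_Icc_const x s c μ₁ (by omega) fun t h1 h2 => hx1 t h1 (le_trans h2 hcη)
  have hS2 : ∑ t ∈ Finset.Icc (c + 1) e, x t
      = ((η : ℝ) - c) * μ₁ + ((e : ℝ) - η) * μ₂ := by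
    rw [sum_Icc_split x (c + 1) η e (by omega) (by omega),
      sum_Icc_const x (c + 1) η μ₁ (by omega) (fun t h1 h2 => hx1 t (by omega) h2),
      sum_Icc_const x (η + 1) e μ₂ (by omega) (fun t h1 h2 => hx2 t (by omega) h2)]
    push_cast
    ring
  have hA : ((c : ℝ) - s + 1) ≠ 0 := by
    have : (s : ℝ) ≤ c := Nat.cast_le.mpr hsc
    linarith
  have hB : ((e : ℝ) - c) ≠ 0 := by
    have : (c : ℝ) < e := Nat.cast_lt.mpr (by omega)
    linarith
  unfold cusum
  rw [hS1, hS2]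
  congr 1
  field_simp
  ring

lemma cusum_right (s η e : ℕ) (μ₁ μ₂ : ℝ) (x : ℕ → ℝ)
    (hx1 : ∀ t, s ≤ t → t ≤ η → x t = μ₁)
    (hx2 : ∀ t, η < t → t ≤ e → x t = μ₂)
    (c : ℕ) (hsη : s ≤ η) (hηc : η ≤ c) (hce : c < e) :
    cusum x s c e
      = Real.sqrt (((c : ℝ) - s + 1) * ((e : ℝ) - c) / ((e : ℝ) - s + 1)) *
          (((η : ℝ) - s + 1) * (μ₁ - μ₂) / ((c : ℝ) - s + 1)) := by
  have hS1 : ∑ t ∈ Finset.Icc s c, x t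
      = ((η : ℝ) + 1 - s) * μ₁ + ((c : ℝ) - η) * μ₂ := by
    rw [sum_Icc_split x s η c (by omega) hηc,
      sum_Icc_const x s η μ₁ (by omega) hx1,
      sum_Icc_const x (η + 1) c μ₂ (by omega)
        (fun t h1 h2 => hx2 t (by omega) (by omega))]
    push_cast
    ring
  have hS2 : ∑ t ∈ Finset.Icc (c + 1) e, x t = ((e : ℝ) - c) * μ₂ := by
    rw [sum_Icc_const x (c + 1) e μ₂ (by omega) (fun t h1 h2 => hx2 t (by omega) h2)]
    push_cast
    ring
  have hA : ((c : ℝ) - s + 1) ≠ 0 := by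
    have : (s : ℝ) ≤ c := Nat.cast_le.mpr (le_trans hsη hηc)
    linarith
  have hB : ((e : ℝ) - c) ≠ 0 := by
    have : (c : ℝ) < e := Nat.cast_lt.mpr hce
    linarith
  unfold cusum
  rw [hS1, hS2]
  congr 1
  field_simp
  ring

/-- The CUSUM of a one-change step signal is maximized at the
change-point: let `s ≤ η < e` and `x_t = μ₁` for `s ≤ t ≤ η`, `x_t = μ₂` for `η < t ≤ e`
with `μ₁ ≠ μ₂`. Then `X_{s,η,e} = sqrt((η−s+1)(e−η)/(e−s+1))·(μ₁ − μ₂)` and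
`|X_{s,c,e}| ≤ |X_{s,η,e}|` for every `c ∈ [s, e)`, with equality only at `c = η`. -/
theorem stmt13 (s η e : ℕ) (hsη : s ≤ η) (hηe : η < e)
    (μ₁ μ₂ : ℝ) (hμ : μ₁ ≠ μ₂) (x : ℕ → ℝ)
    (hx1 : ∀ t, s ≤ t → t ≤ η → x t = μ₁)
    (hx2 : ∀ t, η < t → t ≤ e → x t = μ₂) :
    cusum x s η e
        = Real.sqrt (((η : ℝ) - s + 1) * ((e : ℝ) - η) / ((e : ℝ) - s + 1)) * (μ₁ - μ₂) ∧
      (∀ c, s ≤ c → c < e → |cusum x s c e| ≤ |cusum x s η e|) ∧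
      (∀ c, s ≤ c → c < e → |cusum x s c e| = |cusum x s η e| → c = η) := by
  have hse : s < e := lt_of_le_of_lt hsη hηe
  have hsηR : (s : ℝ) ≤ η := Nat.cast_le.mpr hsη
  have hηeR : (η : ℝ) < e := Nat.cast_lt.mpr hηe
  have hseR : (s : ℝ) < e := Nat.cast_lt.mpr hse
  have hNpos : (0 : ℝ) < (e : ℝ) - s + 1 := by linarith
  have hn1pos : (0 : ℝ) < (η : ℝ) - s + 1 := by linarith
  have hbηpos : (0 : ℝ) < (e : ℝ) - η := by linarith
  have hΔ : μ₁ - μ₂ ≠ 0 := sub_ne_zero.mpr hμ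
  have hΔ2 : (0 : ℝ) < (μ₁ - μ₂) ^ 2 := by positivity
  -- value at the change-point
  have part1 : cusum x s η e
      = Real.sqrt (((η : ℝ) - s + 1) * ((e : ℝ) - η) / ((e : ℝ) - s + 1)) * (μ₁ - μ₂) := by
    rw [cusum_left s η e μ₁ μ₂ x hx1 hx2 η hsη le_rfl hηe]
    congr 1
    rw [mul_comm ((e : ℝ) - η) (μ₁ - μ₂), mul_div_assoc, div_self (ne_of_gt hbηpos), mul_one]
  have hηsq : (cusum x s η e) ^ 2
      = ((η : ℝ) - s + 1) * ((e : ℝ) - η) * (μ₁ - μ₂) ^ 2 / ((e : ℝ) - s + 1) := by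
    rw [part1, mul_pow, Real.sq_sqrt (by positivity)]
    ring
  -- strict inequality off the change-point
  have hstrict : ∀ c, s ≤ c → c < e → c ≠ η →
      (cusum x s c e) ^ 2 < (cusum x s η e) ^ 2 := by
    intro c hsc hce hne
    have hscR : (s : ℝ) ≤ c := Nat.cast_le.mpr hsc
    have hceR : (c : ℝ) < e := Nat.cast_lt.mpr hce
    have hApos : (0 : ℝ) < (c : ℝ) - s + 1 := by linarith
    have hBpos : (0 : ℝ) < (e : ℝ) - c := by linarith
    rcases lt_or_gt_of_ne hne with hcη | hηc
    · -- c < η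
      have hcηR : (c : ℝ) < η := Nat.cast_lt.mpr hcη
      have hd : (1 : ℝ) ≤ (η : ℝ) - c := by
        have : (c : ℝ) + 1 ≤ η := by exact_mod_cast Nat.succ_le_of_lt hcη
        linarith
      have hL : (cusum x s c e) ^ 2
          = ((c : ℝ) - s + 1) * ((e : ℝ) - η) ^ 2 * (μ₁ - μ₂) ^ 2
              / (((e : ℝ) - c) * ((e : ℝ) - s + 1)) := by
        rw [cusum_left s η e μ₁ μ₂ x hx1 hx2 c hsc (le_of_lt hcη) hηe, mul_pow,
          Real.sq_sqrt (by positivity)]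
        field_simp
      have key : ((c : ℝ) - s + 1) * ((e : ℝ) - η) < (((η : ℝ) - s + 1)) * ((e : ℝ) - c) := by
        nlinarith
      rw [hL, hηsq, div_lt_div_iff₀ (by positivity) hNpos]
      have hf : (0 : ℝ) < ((e : ℝ) - η) * (μ₁ - μ₂) ^ 2 * ((e : ℝ) - s + 1) := by positivity
      calc ((c : ℝ) - s + 1) * ((e : ℝ) - η) ^ 2 * (μ₁ - μ₂) ^ 2 * ((e : ℝ) - s + 1)
          = ((c : ℝ) - s + 1) * ((e : ℝ) - η)
              * (((e : ℝ) - η) * (μ₁ - μ₂) ^ 2 * ((e : ℝ) - s + 1)) := by ring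
        _ < ((η : ℝ) - s + 1) * ((e : ℝ) - c)
              * (((e : ℝ) - η) * (μ₁ - μ₂) ^ 2 * ((e : ℝ) - s + 1)) :=
            mul_lt_mul_of_pos_right key hf
        _ = ((η : ℝ) - s + 1) * ((e : ℝ) - η) * (μ₁ - μ₂) ^ 2
              * (((e : ℝ) - c) * ((e : ℝ) - s + 1)) := by ring
    · -- η < c
      have hηcR : (η : ℝ) < c := Nat.cast_lt.mpr hηc
      have hd : (1 : ℝ) ≤ (c : ℝ) - η := by
        have : (η : ℝ) + 1 ≤ c := by exact_mod_cast Nat.succ_le_of_lt hηc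
        linarith
      have hL : (cusum x s c e) ^ 2
          = ((e : ℝ) - c) * ((η : ℝ) - s + 1) ^ 2 * (μ₁ - μ₂) ^ 2
              / (((c : ℝ) - s + 1) * ((e : ℝ) - s + 1)) := by
        rw [cusum_right s η e μ₁ μ₂ x hx1 hx2 c hsη (le_of_lt hηc) hce, mul_pow,
          Real.sq_sqrt (by positivity)]
        field_simp
      have key : ((e : ℝ) - c) * (((η : ℝ) - s + 1)) < ((c : ℝ) - s + 1) * ((e : ℝ) - η) := by
        nlinarith
      rw [hL, hηsq, div_lt_div_iff₀ (by positivity) hNpos]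
      have hf : (0 : ℝ) < ((η : ℝ) - s + 1) * (μ₁ - μ₂) ^ 2 * ((e : ℝ) - s + 1) := by positivity
      calc ((e : ℝ) - c) * ((η : ℝ) - s + 1) ^ 2 * (μ₁ - μ₂) ^ 2 * ((e : ℝ) - s + 1)
          = ((e : ℝ) - c) * ((η : ℝ) - s + 1)
              * (((η : ℝ) - s + 1) * (μ₁ - μ₂) ^ 2 * ((e : ℝ) - s + 1)) := by ring
        _ < ((c : ℝ) - s + 1) * ((e : ℝ) - η)
              * (((η : ℝ) - s + 1) * (μ₁ - μ₂) ^ 2 * ((e : ℝ) - s + 1)) :=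
            mul_lt_mul_of_pos_right key hf
        _ = ((η : ℝ) - s + 1) * ((e : ℝ) - η) * (μ₁ - μ₂) ^ 2
              * (((c : ℝ) - s + 1) * ((e : ℝ) - s + 1)) := by ring
  refine ⟨part1, ?_, ?_⟩
  · intro c hsc hce
    rcases eq_or_ne c η with rfl | hne
    · exact le_refl _
    · rw [← Real.sqrt_sq_eq_abs, ← Real.sqrt_sq_eq_abs]
      exact Real.sqrt_le_sqrt (le_of_lt (hstrict c hsc hce hne))
  · intro c hsc hce heq
    by_contra hne
    have h1 := hstrict c hsc hce hne
    have h2 : (cusum x s c e) ^ 2 = (cusum x s η e) ^ 2 := by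
      rw [← sq_abs, ← sq_abs (cusum x s η e), heq]
    linarith
end
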